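/- For every admissible primitive state v = (ρ, u₁, u₂, u₃, T) with ρ > 0 and T > 0, and for any gas constants R > 0 and c_v > 0 (with c_p = c_v + R), the 5×5 matrix M(v) is symmetric positive definite. Consequently, for any scalar ν > 0 the matrix ν·M(v) is symmetric positive definite, and θᵀ (ν M(v)) θ > 0 for every nonzero θ ∈ ℝ⁵. -/

import Mathlib

open Matrix

noncomputable section

/-- The symmetric 5×5 change-of-variables Jacobian `dq/dw` expressed in primitive
variables `v = (ρ, u₁, u₂, u₃, T)`, with gas constant `R` and heat capacity at
constant pressure `cp`. -/
def Mmat (R cp ρ u₁ u₂ u₃ T : ℝ) : Matrix (Fin 5) (Fin 5) ℝ :=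
  !![ρ / R, ρ * u₁ / R, ρ * u₂ / R, ρ * u₃ / R,
       ρ * (-2 * R * T + (u₁ ^ 2 + u₂ ^ 2 + u₃ ^ 2) + 2 * T * cp) / (2 * R);
     ρ * u₁ / R, ρ * (T + u₁ ^ 2 / R), ρ * u₁ * u₂ / R, ρ * u₁ * u₃ / R,
       ρ * u₁ * ((u₁ ^ 2 + u₂ ^ 2 + u₃ ^ 2) + 2 * T * cp) / (2 * R);
     ρ * u₂ / R, ρ * u₁ * u₂ / R, ρ * (T + u₂ ^ 2 / R), ρ * u₂ * u₃ / R,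
       ρ * u₂ * ((u₁ ^ 2 + u₂ ^ 2 + u₃ ^ 2) + 2 * T * cp) / (2 * R);
     ρ * u₃ / R, ρ * u₁ * u₃ / R, ρ * u₂ * u₃ / R, ρ * (T + u₃ ^ 2 / R),
       ρ * u₃ * ((u₁ ^ 2 + u₂ ^ 2 + u₃ ^ 2) + 2 * T * cp) / (2 * R);
     ρ * (-2 * R * T + (u₁ ^ 2 + u₂ ^ 2 + u₃ ^ 2) + 2 * T * cp) / (2 * R),
       ρ * u₁ * ((u₁ ^ 2 + u₂ ^ 2 + u₃ ^ 2) + 2 * T * cp) / (2 * R),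
       ρ * u₂ * ((u₁ ^ 2 + u₂ ^ 2 + u₃ ^ 2) + 2 * T * cp) / (2 * R),
       ρ * u₃ * ((u₁ ^ 2 + u₂ ^ 2 + u₃ ^ 2) + 2 * T * cp) / (2 * R),
       ρ * ((u₁ ^ 2 + u₂ ^ 2 + u₃ ^ 2) ^ 2
            + 4 * T * cp * (-(R * T) + (u₁ ^ 2 + u₂ ^ 2 + u₃ ^ 2) + T * cp)) / (4 * R)]

set_option maxHeartbeats 1600000 in
lemma Mmat_quad (R cv ρ u₁ u₂ u₃ T : ℝ) (hR : R ≠ 0) (θ : Fin 5 → ℝ) :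
    θ ⬝ᵥ (Mmat R (cv + R) ρ u₁ u₂ u₃ T *ᵥ θ) =
    ρ * ((θ 0 + u₁ * θ 1 + u₂ * θ 2 + u₃ * θ 3
          + ((u₁ ^ 2 + u₂ ^ 2 + u₃ ^ 2) / 2 + T * cv) * θ 4) ^ 2 / R
      + T * ((θ 1 + θ 4 * u₁) ^ 2 + (θ 2 + θ 4 * u₂) ^ 2 + (θ 3 + θ 4 * u₃) ^ 2)
      + T ^ 2 * cv * (θ 4) ^ 2) := by
  simp only [Mmat, dotProduct, mulVec, Fin.sum_univ_five, Matrix.cons_val', Matrix.cons_val_zero,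
    Matrix.cons_val_one, Matrix.head_cons, Matrix.empty_val', Matrix.cons_val_fin_one,
    Matrix.head_fin_const, Matrix.cons_val_two, Matrix.tail_cons, Matrix.cons_val_three,
    Matrix.cons_val_four, Matrix.head_fin_const, Matrix.of_apply]
  field_simp
  ring

set_option maxHeartbeats 1600000 in
lemma Mmat_quad_pos (R cv ρ u₁ u₂ u₃ T : ℝ) (hR : 0 < R) (hcv : 0 < cv)
    (hρ : 0 < ρ) (hT : 0 < T) (θ : Fin 5 → ℝ) (hθ : θ ≠ 0) :
    0 < θ ⬝ᵥ (Mmat R (cv + R) ρ u₁ u₂ u₃ T *ᵥ θ) := by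
  rw [Mmat_quad R cv ρ u₁ u₂ u₃ T hR.ne' θ]
  by_contra h
  push_neg at h
  have hX : 0 ≤ (θ 0 + u₁ * θ 1 + u₂ * θ 2 + u₃ * θ 3
      + ((u₁ ^ 2 + u₂ ^ 2 + u₃ ^ 2) / 2 + T * cv) * θ 4) ^ 2 / R :=
    div_nonneg (sq_nonneg _) hR.le
  have hY : 0 ≤ T * ((θ 1 + θ 4 * u₁) ^ 2 + (θ 2 + θ 4 * u₂) ^ 2 + (θ 3 + θ 4 * u₃) ^ 2) := by
    positivity
  have hc : 0 < T ^ 2 * cv := by positivity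
  have h1 : (θ 0 + u₁ * θ 1 + u₂ * θ 2 + u₃ * θ 3
      + ((u₁ ^ 2 + u₂ ^ 2 + u₃ ^ 2) / 2 + T * cv) * θ 4) ^ 2 / R
      + T * ((θ 1 + θ 4 * u₁) ^ 2 + (θ 2 + θ 4 * u₂) ^ 2 + (θ 3 + θ 4 * u₃) ^ 2)
      + T ^ 2 * cv * (θ 4) ^ 2 ≤ 0 := by
    nlinarith [hX, hY, hc, sq_nonneg (θ 4)]
  have h4 : θ 4 = 0 := by
    have : (θ 4) ^ 2 ≤ 0 := by nlinarith [hX, hY, hc, sq_nonneg (θ 4)]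
    exact (pow_eq_zero_iff two_ne_zero).mp (le_antisymm this (sq_nonneg _))
  rw [h4] at h1
  simp only [mul_zero, zero_mul, add_zero] at h1
  have hX0 : 0 ≤ (θ 0 + u₁ * θ 1 + u₂ * θ 2 + u₃ * θ 3) ^ 2 / R :=
    div_nonneg (sq_nonneg _) hR.le
  have h123 : (θ 1) ^ 2 + (θ 2) ^ 2 + (θ 3) ^ 2 ≤ 0 := by
    nlinarith [hX0, hT, sq_nonneg (θ 1), sq_nonneg (θ 2), sq_nonneg (θ 3)]
  have ht1 : θ 1 = 0 := by
    have : (θ 1) ^ 2 ≤ 0 := by nlinarith [sq_nonneg (θ 2), sq_nonneg (θ 3)]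
    exact (pow_eq_zero_iff two_ne_zero).mp (le_antisymm this (sq_nonneg _))
  have ht2 : θ 2 = 0 := by
    have : (θ 2) ^ 2 ≤ 0 := by nlinarith [sq_nonneg (θ 1), sq_nonneg (θ 3)]
    exact (pow_eq_zero_iff two_ne_zero).mp (le_antisymm this (sq_nonneg _))
  have ht3 : θ 3 = 0 := by
    have : (θ 3) ^ 2 ≤ 0 := by nlinarith [sq_nonneg (θ 1), sq_nonneg (θ 2)]
    exact (pow_eq_zero_iff two_ne_zero).mp (le_antisymm this (sq_nonneg _))
  rw [ht1, ht2, ht3] at h1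
  simp only [mul_zero, zero_mul, add_zero] at h1
  have ht0 : θ 0 = 0 := by
    have h0 : (θ 0) ^ 2 / R ≤ 0 := by nlinarith [hT]
    have : (θ 0) ^ 2 ≤ 0 := by
      by_contra hh
      push_neg at hh
      exact absurd (div_pos hh hR) (not_lt.mpr h0)
    exact (pow_eq_zero_iff two_ne_zero).mp (le_antisymm this (sq_nonneg _))
  apply hθ
  funext i
  fin_cases i <;> simpa using by assumption

set_option linter.unreachableTactic false in
set_option linter.unusedTactic false in
lemma Mmat_isSymm (R cp ρ u₁ u₂ u₃ T : ℝ) : (Mmat R cp ρ u₁ u₂ u₃ T).IsSymm := by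
  rw [Matrix.IsSymm]
  ext i j
  fin_cases i <;> fin_cases j <;> simp [Mmat] <;> ring

lemma Mmat_posDef_aux (R cv ρ u₁ u₂ u₃ T : ℝ) (hR : 0 < R) (hcv : 0 < cv)
    (hρ : 0 < ρ) (hT : 0 < T) : (Mmat R (cv + R) ρ u₁ u₂ u₃ T).PosDef := by
  rw [posDef_iff_dotProduct_mulVec]
  constructor
  · rw [Matrix.IsHermitian, conjTranspose]
    simpa [Matrix.IsSymm, Matrix.map, Matrix.transpose] using (Mmat_isSymm R (cv + R) ρ u₁ u₂ u₃ T)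
  · intro x hx
    simpa using Mmat_quad_pos R cv ρ u₁ u₂ u₃ T hR hcv hρ hT x hx

/-- for every admissible primitive state (`ρ > 0`, `T > 0`) and any
gas constants `R > 0`, `c_v > 0` (with `c_p = c_v + R`), the matrix `M(v)` is
symmetric positive definite; consequently, for any scalar `ν > 0` the matrix
`ν • M(v)` is symmetric positive definite and `θᵀ (ν M(v)) θ > 0` for every
nonzero `θ ∈ ℝ⁵`. -/
theorem Mmat_posDef
    (R cv ρ u₁ u₂ u₃ T : ℝ) (hR : 0 < R) (hcv : 0 < cv)
    (hρ : 0 < ρ) (hT : 0 < T) :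
    (Mmat R (cv + R) ρ u₁ u₂ u₃ T).IsSymm ∧
    (Mmat R (cv + R) ρ u₁ u₂ u₃ T).PosDef ∧
    ∀ ν : ℝ, 0 < ν →
      (ν • Mmat R (cv + R) ρ u₁ u₂ u₃ T).PosDef ∧
      ∀ θ : Fin 5 → ℝ, θ ≠ 0 →
        0 < θ ⬝ᵥ ((ν • Mmat R (cv + R) ρ u₁ u₂ u₃ T) *ᵥ θ) := by
  refine ⟨Mmat_isSymm R (cv + R) ρ u₁ u₂ u₃ T, Mmat_posDef_aux R cv ρ u₁ u₂ u₃ T hR hcv hρ hT,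
    fun ν hν => ⟨?_, fun θ hθ => ?_⟩⟩
  · obtain ⟨hH, hP⟩ := posDef_iff_dotProduct_mulVec.mp (Mmat_posDef_aux R cv ρ u₁ u₂ u₃ T hR hcv hρ hT)
    refine posDef_iff_dotProduct_mulVec.mpr ⟨?_, fun x hx => ?_⟩
    · simpa [Matrix.IsHermitian, conjTranspose_smul] using congrArg (ν • ·) hH.eq
    · have := hP hx
      rw [smul_mulVec, dotProduct_smul]
      simpa using mul_pos hν this
  · have := (posDef_iff_dotProduct_mulVec.mp (Mmat_posDef_aux R cv ρ u₁ u₂ u₃ T hR hcv hρ hT)).2 hθ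
    rw [smul_mulVec, dotProduct_smul]
    simp only [star_trivial] at this ⊢
    simpa using mul_pos hν this
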